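/- Let ρ, φ : ℝ^N → ℝ be measurable with ‖ρ‖_{Hˢ_Ω} < ∞ and ‖φ‖_{Hˢ_Ω} < ∞, and assume that N_s ρ ∈ L²(ℝ^N ∖ Ω) and that the product (N_s ρ)·φ is integrable on ℝ^N ∖ Ω. Then |F_R(ρ, φ) − ∫_{ℝ^N ∖ Ω} (N_s ρ)(x) φ(x) dx| ≤ (F_R(ρ, ρ) + ‖N_s ρ‖²_{L²(ℝ^N ∖ Ω)})^{1/2} · ‖φ‖_{Hˢ_Ω}. -/

import Mathlib

open MeasureTheory Real Set

noncomputable section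

/-- Euclidean space `ℝ^N`. -/
abbrev E (N : ℕ) := EuclideanSpace ℝ (Fin N)

/-- The normalization constant `C_{N,s} = s·2^{2s}·Γ((N+2s)/2)/(π^{N/2}·Γ(1−s))`. -/
def CNs (N : ℕ) (s : ℝ) : ℝ :=
  s * (2 : ℝ) ^ (2 * s) * Real.Gamma (((N : ℝ) + 2 * s) / 2) /
    (Real.pi ^ ((N : ℝ) / 2) * Real.Gamma (1 - s))

/-- The Gagliardo kernel integrand `(u(x)−u(y))(v(x)−v(y))/|x−y|^{N+2s}`. -/
def kern (N : ℕ) (s : ℝ) (u v : E N → ℝ) (p : E N × E N) : ℝ :=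
  (u p.1 - u p.2) * (v p.1 - v p.2) / ‖p.1 - p.2‖ ^ ((N : ℝ) + 2 * s)

/-- The region `ℝ^{2N} ∖ ((ℝ^N∖Ω)×(ℝ^N∖Ω))`. -/
def crossRegion (N : ℕ) (Ω : Set (E N)) : Set (E N × E N) := (Ωᶜ ×ˢ Ωᶜ)ᶜ

/-- The restricted bilinear form `F_R(u,v)`. -/
def FR (N : ℕ) (s : ℝ) (Ω : Set (E N)) (u v : E N → ℝ) : ℝ :=
  (CNs N s / 2) * ∫ p in crossRegion N Ω, kern N s u v p

/-- The nonlocal normal derivative `N_s u(x) = C_{N,s} ∫_Ω (u(x)−u(y))/|x−y|^{N+2s} dy`. -/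
def Nder (N : ℕ) (s : ℝ) (Ω : Set (E N)) (u : E N → ℝ) (x : E N) : ℝ :=
  CNs N s * ∫ y in Ω, (u x - u y) / ‖x - y‖ ^ ((N : ℝ) + 2 * s)

/-- Cauchy–Schwarz for integrals of real functions. -/
lemma cs_integral {α : Type*} [MeasurableSpace α] {μ : Measure α} {f g : α → ℝ}
    (hfm : AEStronglyMeasurable f μ) (hgm : AEStronglyMeasurable g μ)
    (hf2 : Integrable (fun x => f x ^ 2) μ) (hg2 : Integrable (fun x => g x ^ 2) μ) :
    |∫ x, f x * g x ∂μ| ≤ Real.sqrt (∫ x, f x ^ 2 ∂μ) * Real.sqrt (∫ x, g x ^ 2 ∂μ) := by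
  have h22 : (2:ℝ).HolderConjugate 2 := ⟨by norm_num, by norm_num, by norm_num⟩
  have hof : (ENNReal.ofReal (2:ℝ)) = 2 := by norm_num
  have hf : MemLp (fun x => |f x|) (ENNReal.ofReal (2:ℝ)) μ := by
    rw [hof]
    simpa [Real.norm_eq_abs] using ((memLp_two_iff_integrable_sq hfm).2 hf2).norm
  have hg : MemLp (fun x => |g x|) (ENNReal.ofReal (2:ℝ)) μ := by
    rw [hof]
    simpa [Real.norm_eq_abs] using ((memLp_two_iff_integrable_sq hgm).2 hg2).norm
  have h := integral_mul_le_Lp_mul_Lq_of_nonneg h22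
    (Filter.Eventually.of_forall fun x => abs_nonneg (f x))
    (Filter.Eventually.of_forall fun x => abs_nonneg (g x)) hf hg
  have habs : |∫ x, f x * g x ∂μ| ≤ ∫ x, |f x| * |g x| ∂μ := by
    have h1 : |∫ x, f x * g x ∂μ| ≤ ∫ x, ‖f x * g x‖ ∂μ := by
      rw [← Real.norm_eq_abs]
      exact norm_integral_le_integral_norm _
    have h2 : ∫ x, ‖f x * g x‖ ∂μ = ∫ x, |f x| * |g x| ∂μ := by
      simp only [Real.norm_eq_abs, abs_mul]
    linarith
  refine habs.trans (h.trans (le_of_eq ?_))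
  rw [Real.sqrt_eq_rpow, Real.sqrt_eq_rpow]
  congr 2
  · refine integral_congr_ae (Filter.Eventually.of_forall fun x => ?_)
    simp only [Real.rpow_two, sq_abs]
  · refine integral_congr_ae (Filter.Eventually.of_forall fun x => ?_)
    simp only [Real.rpow_two, sq_abs]

/-- Two-term Cauchy–Schwarz for square roots. -/
lemma sqrt_two_cs {a b c d : ℝ} (ha : 0 ≤ a) (hb : 0 ≤ b) (hc : 0 ≤ c) (hd : 0 ≤ d) :
    Real.sqrt a * Real.sqrt b + Real.sqrt c * Real.sqrt d ≤
      Real.sqrt (a + c) * Real.sqrt (d + b) := by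
  rw [← Real.sqrt_mul (by linarith : (0:ℝ) ≤ a + c)]
  have hA := Real.sq_sqrt ha
  have hB := Real.sq_sqrt hb
  have hC := Real.sq_sqrt hc
  have hD := Real.sq_sqrt hd
  have h0 : 0 ≤ Real.sqrt a * Real.sqrt b + Real.sqrt c * Real.sqrt d := by positivity
  have key : (Real.sqrt a * Real.sqrt b + Real.sqrt c * Real.sqrt d) ^ 2 ≤ (a + c) * (d + b) := by
    nlinarith [sq_nonneg (Real.sqrt a * Real.sqrt d - Real.sqrt c * Real.sqrt b),
      Real.sqrt_nonneg a, Real.sqrt_nonneg b, Real.sqrt_nonneg c, Real.sqrt_nonneg d]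
  calc Real.sqrt a * Real.sqrt b + Real.sqrt c * Real.sqrt d
      = Real.sqrt ((Real.sqrt a * Real.sqrt b + Real.sqrt c * Real.sqrt d) ^ 2) :=
        (Real.sqrt_sq h0).symm
    _ ≤ Real.sqrt ((a + c) * (d + b)) := Real.sqrt_le_sqrt key

/-- Cauchy–Schwarz type bound for `F_R(ρ,φ) − ∫_{ℝ^N∖Ω} (N_s ρ) φ`. -/
theorem FR_Nder_bound (N : ℕ) (s : ℝ) (hN : 1 ≤ N) (hs0 : 0 < s) (hs1 : s < 1)
    (Ω : Set (E N)) (hΩne : Ω.Nonempty) (hΩo : IsOpen Ω) (hΩb : Bornology.IsBounded Ω)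
    (ρ φ : E N → ℝ) (hρm : Measurable ρ) (hφm : Measurable φ)
    (hρ2 : Integrable (fun x => ρ x ^ 2))
    (hρF : IntegrableOn (kern N s ρ ρ) (crossRegion N Ω))
    (hφ2 : Integrable (fun x => φ x ^ 2))
    (hφF : IntegrableOn (kern N s φ φ) (crossRegion N Ω))
    (hNρ : MemLp (Nder N s Ω ρ) 2 (volume.restrict Ωᶜ))
    (hNρφ : IntegrableOn (fun x => Nder N s Ω ρ x * φ x) Ωᶜ) :
    |FR N s Ω ρ φ - ∫ x in Ωᶜ, Nder N s Ω ρ x * φ x| ≤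
      Real.sqrt (FR N s Ω ρ ρ + ∫ x in Ωᶜ, (Nder N s Ω ρ x) ^ 2) *
        Real.sqrt ((∫ x, φ x ^ 2) + FR N s Ω φ φ) := by
  set β : ℝ := ((N : ℝ) + 2 * s) / 2 with hβ
  set h : (E N → ℝ) → E N × E N → ℝ :=
    fun u p => (u p.1 - u p.2) / ‖p.1 - p.2‖ ^ β with hh
  -- factorization of the kernel
  have hkern : ∀ u v : E N → ℝ, kern N s u v = fun p => h u p * h v p := by
    intro u v
    funext p
    have hx : (0:ℝ) ≤ ‖p.1 - p.2‖ := norm_nonneg _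
    have hpow : ‖p.1 - p.2‖ ^ ((N : ℝ) + 2 * s) = (‖p.1 - p.2‖ ^ β) ^ (2:ℕ) := by
      rw [← Real.rpow_natCast (‖p.1 - p.2‖ ^ β) 2, ← Real.rpow_mul hx]
      norm_num [hβ]
    simp only [kern, hh, hpow]
    ring
  have hsq : ∀ u : E N → ℝ, kern N s u u = fun p => (h u p) ^ 2 := by
    intro u
    rw [hkern u u]
    funext p
    ring
  -- measurability
  have hmeas : ∀ u : E N → ℝ, Measurable u → Measurable (h u) := by
    intro u hu
    exact ((hu.comp measurable_fst).sub (hu.comp measurable_snd)).div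
      ((measurable_fst.sub measurable_snd).norm.pow_const β)
  have hC0 : 0 < CNs N s := by
    have h1 : 0 < Real.Gamma (((N : ℝ) + 2 * s) / 2) := Real.Gamma_pos_of_pos (by positivity)
    have h2 : 0 < Real.Gamma (1 - s) := Real.Gamma_pos_of_pos (by linarith)
    rw [CNs]
    positivity
  have hC : (0:ℝ) ≤ CNs N s / 2 := by linarith
  set μc := volume.restrict (crossRegion N Ω) with hμc
  have hρsq : Integrable (fun p => (h ρ p) ^ 2) μc := by
    have h' := hρF
    rw [IntegrableOn, hsq ρ] at h'
    exact h'
  have hφsq : Integrable (fun p => (h φ p) ^ 2) μc := by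
    have h' := hφF
    rw [IntegrableOn, hsq φ] at h'
    exact h'
  have hAint : |∫ p, h ρ p * h φ p ∂μc| ≤
      Real.sqrt (∫ p, (h ρ p)^2 ∂μc) * Real.sqrt (∫ p, (h φ p)^2 ∂μc) :=
    cs_integral ((hmeas ρ hρm).aestronglyMeasurable) ((hmeas φ hφm).aestronglyMeasurable) hρsq hφsq
  have hFRρφ : FR N s Ω ρ φ = (CNs N s / 2) * ∫ p, h ρ p * h φ p ∂μc := by
    unfold FR
    rw [hkern ρ φ]
  have hFRρρ : FR N s Ω ρ ρ = (CNs N s / 2) * ∫ p, (h ρ p)^2 ∂μc := by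
    unfold FR
    rw [hsq ρ]
  have hFRφφ : FR N s Ω φ φ = (CNs N s / 2) * ∫ p, (h φ p)^2 ∂μc := by
    unfold FR
    rw [hsq φ]
  have hIρ : 0 ≤ ∫ p, (h ρ p)^2 ∂μc := integral_nonneg fun p => sq_nonneg _
  have hIφ : 0 ≤ ∫ p, (h φ p)^2 ∂μc := integral_nonneg fun p => sq_nonneg _
  have hFRρρ0 : 0 ≤ FR N s Ω ρ ρ := by rw [hFRρρ]; positivity
  have hFRφφ0 : 0 ≤ FR N s Ω φ φ := by rw [hFRφφ]; positivity
  have hstepA : |FR N s Ω ρ φ| ≤ Real.sqrt (FR N s Ω ρ ρ) * Real.sqrt (FR N s Ω φ φ) := by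
    rw [hFRρφ, hFRρρ, hFRφφ, abs_mul, abs_of_nonneg hC,
      Real.sqrt_mul hC, Real.sqrt_mul hC]
    have hc : Real.sqrt (CNs N s / 2) * Real.sqrt (CNs N s / 2) = CNs N s / 2 :=
      Real.mul_self_sqrt hC
    calc CNs N s / 2 * |∫ p, h ρ p * h φ p ∂μc|
        ≤ CNs N s / 2 * (Real.sqrt (∫ p, (h ρ p)^2 ∂μc) * Real.sqrt (∫ p, (h φ p)^2 ∂μc)) :=
          mul_le_mul_of_nonneg_left hAint hC
      _ = Real.sqrt (CNs N s / 2) * Real.sqrt (CNs N s / 2) *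
            (Real.sqrt (∫ p, (h ρ p)^2 ∂μc) * Real.sqrt (∫ p, (h φ p)^2 ∂μc)) := by rw [hc]
      _ = Real.sqrt (CNs N s / 2) * Real.sqrt (∫ p, (h ρ p)^2 ∂μc) *
            (Real.sqrt (CNs N s / 2) * Real.sqrt (∫ p, (h φ p)^2 ∂μc)) :=
          mul_mul_mul_comm _ _ _ _
  have hNsq : Integrable (fun x => (Nder N s Ω ρ x) ^ 2) (volume.restrict Ωᶜ) :=
    (memLp_two_iff_integrable_sq hNρ.aestronglyMeasurable).1 hNρ
  have hφsqr : Integrable (fun x => φ x ^ 2) (volume.restrict Ωᶜ) := hφ2.restrict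
  have hstepB : |∫ x in Ωᶜ, Nder N s Ω ρ x * φ x| ≤
      Real.sqrt (∫ x in Ωᶜ, (Nder N s Ω ρ x)^2) * Real.sqrt (∫ x, φ x ^ 2) := by
    have h1 := cs_integral hNρ.aestronglyMeasurable
      (hφm.aestronglyMeasurable.restrict) hNsq hφsqr
    refine h1.trans (mul_le_mul_of_nonneg_left (Real.sqrt_le_sqrt ?_) (Real.sqrt_nonneg _))
    exact setIntegral_le_integral hφ2 (Filter.Eventually.of_forall fun x => sq_nonneg _)
  have hN20 : 0 ≤ ∫ x in Ωᶜ, (Nder N s Ω ρ x)^2 := integral_nonneg fun x => sq_nonneg _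
  have hφ20 : 0 ≤ ∫ x, φ x ^ 2 := integral_nonneg fun x => sq_nonneg _
  calc |FR N s Ω ρ φ - ∫ x in Ωᶜ, Nder N s Ω ρ x * φ x|
      ≤ |FR N s Ω ρ φ| + |∫ x in Ωᶜ, Nder N s Ω ρ x * φ x| := abs_sub _ _
    _ ≤ Real.sqrt (FR N s Ω ρ ρ) * Real.sqrt (FR N s Ω φ φ) +
        Real.sqrt (∫ x in Ωᶜ, (Nder N s Ω ρ x)^2) * Real.sqrt (∫ x, φ x ^ 2) :=
          add_le_add hstepA hstepB
    _ ≤ _ := sqrt_two_cs hFRρρ0 hFRφφ0 hN20 hφ20
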